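/- Let A be a normalized deterministic parity tree automaton over a finite nonempty alphabet Σ. Then L(A) is an open subset of T_Σ if and only if A contains no weak (0,1)-flower. -/

import Mathlib

open Filter

/-- A deterministic parity tree automaton over alphabet `Alpha` with state set `Q`. -/
structure DPTA (Alpha : Type) (Q : Type) where
  init : Q
  delta : Q → Alpha → Q × Q
  rank : Q → ℕ

namespace DPTA

variable {Alpha Q : Type}

/-- The state reached in one step from `q` reading letter `s` in direction `d`. -/
def next (M : DPTA Alpha Q) (q : Q) (s : Alpha) (d : Bool) : Q :=
  if d then (M.delta q s).2 else (M.delta q s).1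

/-- The state of the run started in `q` on the tree `t` at the node `v`
(nodes are words over `{0,1}`, head = first direction from the root). -/
def runFrom (M : DPTA Alpha Q) : Q → (List Bool → Alpha) → List Bool → Q
  | q, _, [] => q
  | q, t, d :: v => runFrom M (M.next q (t []) d) (fun u => t (d :: u)) v

/-- The state of the (unique) run of `M` on `t` at node `v`. -/
def run (M : DPTA Alpha Q) (t : List Bool → Alpha) (v : List Bool) : Q :=
  runFrom M M.init t v

/-- Parity acceptance: the largest value occurring infinitely often is even. -/
def ParityAccept (f : ℕ → ℕ) : Prop :=
  Even (sSup {r : ℕ | ∃ᶠ n in atTop, f n = r})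

/-- The prefix of length `n` of an infinite path. -/
def pref (π : ℕ → Bool) (n : ℕ) : List Bool :=
  List.ofFn fun i : Fin n => π i

/-- The run of `M` on `t` started at state `q` is accepting. -/
def AcceptsFrom (M : DPTA Alpha Q) (q : Q) (t : List Bool → Alpha) : Prop :=
  ∀ π : ℕ → Bool, ParityAccept fun n => M.rank (runFrom M q t (pref π n))

/-- The language recognised by `M`: trees with accepting run. -/
def Lang (M : DPTA Alpha Q) : Set (List Bool → Alpha) :=
  {t | M.AcceptsFrom M.init t}

/-- The state reached from `q` following a finite sequence of steps
(steps = letter together with direction). -/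
def follow (M : DPTA Alpha Q) (q : Q) (steps : List (Alpha × Bool)) : Q :=
  steps.foldl (fun p s => M.next p s.1 s.2) q

/-- All states visited along a path (the starting state included). -/
def statesOn (M : DPTA Alpha Q) (q : Q) (steps : List (Alpha × Bool)) : List Q :=
  List.scanl (fun p s => M.next p s.1 s.2) q steps

/-- The largest rank of a state visited along a path. -/
def maxRankOn (M : DPTA Alpha Q) (q : Q) (steps : List (Alpha × Bool)) : ℕ :=
  ((M.statesOn q steps).map M.rank).foldr max 0

/-- `steps` forms a loop at `q` (a path of positive length from `q` to `q`). -/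
def IsLoop (M : DPTA Alpha Q) (q : Q) (steps : List (Alpha × Bool)) : Prop :=
  steps ≠ [] ∧ M.follow q steps = q

/-- `M` contains an `(i,k)`-flower: loops `lam i, …, lam k` at a common state `q`,
the largest rank on `lam j` has the parity of `j` and increases strictly with `j`. -/
def HasFlower (M : DPTA Alpha Q) (i k : ℕ) : Prop :=
  ∃ (q : Q) (lam : ℕ → List (Alpha × Bool)),
    (∀ j, i ≤ j → j ≤ k → M.IsLoop q (lam j) ∧ M.maxRankOn q (lam j) % 2 = j % 2) ∧
    (∀ j, i ≤ j → j < k → M.maxRankOn q (lam j) < M.maxRankOn q (lam (j + 1)))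

/-- `q` is reachable from the initial state. -/
def Reachable (M : DPTA Alpha Q) (q : Q) : Prop :=
  ∃ steps, M.follow M.init steps = q

/-- `q` is productive: it occurs in some accepting run of `M`. -/
def Productive (M : DPTA Alpha Q) (q : Q) : Prop :=
  ∃ t ∈ M.Lang, ∃ v, M.run t v = q

/-- The transition from `q` reading `s` is used in some accepting run of `M`. -/
def ProductiveTrans (M : DPTA Alpha Q) (q : Q) (s : Alpha) : Prop :=
  ∃ t ∈ M.Lang, ∃ v, M.run t v = q ∧ t v = s

/-- `q` is all-rejecting: started from `q`, the automaton accepts no tree. -/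
def AllRejecting (M : DPTA Alpha Q) (q : Q) : Prop :=
  ∀ t, ¬ M.AcceptsFrom q t

/-- `M` is normalized: every state is reachable, every state is productive except
possibly one all-rejecting state `⊥` with `δ(⊥,σ) = (⊥,⊥)`, and every transition is
productive or of the form `δ(q,σ) = (⊥,⊥)`. -/
def Normalized (M : DPTA Alpha Q) : Prop :=
  (∀ q, M.Reachable q) ∧
  ∃ bot : Option Q,
    (∀ q, some q ≠ bot → M.Productive q) ∧
    (∀ q, some q = bot → M.AllRejecting q ∧ ∀ s, M.delta q s = (q, q)) ∧
    (∀ q s, M.ProductiveTrans q s ∨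
      (some (M.delta q s).1 = bot ∧ some (M.delta q s).2 = bot))

end DPTA


/-- `M` contains a weak `(i,k)`-flower: loops `lam i, …, lam k` such that there is a
path from a state of `lam j` to a state of `lam (j+1)`, and `lam j` is accepting
iff `j` is even. -/
def HasWeakFlower {Alpha Q : Type} (M : DPTA Alpha Q) (i k : ℕ) : Prop :=
  ∃ (q : ℕ → Q) (lam : ℕ → List (Alpha × Bool)),
    (∀ j, i ≤ j → j ≤ k →
      M.IsLoop (q j) (lam j) ∧ (Even (M.maxRankOn (q j) (lam j)) ↔ Even j)) ∧
    (∀ j, i ≤ j → j < k →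
      ∃ s ∈ M.statesOn (q j) (lam j), ∃ s' ∈ M.statesOn (q (j + 1)) (lam (j + 1)),
        ∃ steps, M.follow s steps = s')

open Filter

namespace DW
def freqSet (f : ℕ → ℕ) : Set ℕ := {r | ∃ᶠ n in atTop, f n = r}

lemma sSup_eq_of_mem_of_le {S : Set ℕ} {m : ℕ} (h1 : m ∈ S) (h2 : ∀ x ∈ S, x ≤ m) :
    sSup S = m :=
  le_antisymm (csSup_le ⟨m, h1⟩ h2) (le_csSup ⟨m, fun x hx => h2 x hx⟩ h1)

lemma mem_freqSet {f : ℕ → ℕ} {r : ℕ} : r ∈ freqSet f ↔ ∀ N, ∃ n, N ≤ n ∧ f n = r := by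
  simp [freqSet, frequently_atTop]

lemma freqSet_shift (f : ℕ → ℕ) (k : ℕ) : freqSet (fun n => f (n + k)) = freqSet f := by
  ext r
  rw [mem_freqSet, mem_freqSet]
  constructor
  · intro h N
    obtain ⟨n, hn, he⟩ := h N
    exact ⟨n + k, by omega, he⟩
  · intro h N
    obtain ⟨n, hn, he⟩ := h (N + k)
    exact ⟨n - k, by omega, by rw [show n - k + k = n by omega]; exact he⟩

lemma freqSet_congr {f g : ℕ → ℕ} (h : ∀ᶠ n in atTop, f n = g n) : freqSet f = freqSet g := by
  ext r
  constructor
  · intro hf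
    exact ((hf : ∃ᶠ n in atTop, f n = r).and_eventually h).mono (fun n hn => hn.2 ▸ hn.1)
  · intro hg
    exact ((hg : ∃ᶠ n in atTop, g n = r).and_eventually h).mono (fun n hn => hn.2.symm ▸ hn.1)

lemma freqSet_sub (f : ℕ → ℕ) (c : ℕ) : freqSet (fun n => f (n - c)) = freqSet f := by
  have h := freqSet_shift (fun n => f (n - c)) c
  have h2 : (fun n => f (n + c - c)) = f := by funext n; rw [Nat.add_sub_cancel]
  rw [← h, h2]

lemma per_iterate {γ : Type*} {f : ℕ → γ} {n₀ L : ℕ} (hp : ∀ n, n₀ ≤ n → f (n + L) = f n) :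
    ∀ j n, n₀ ≤ n → f (n + j * L) = f n := by
  intro j
  induction j with
  | zero => simp
  | succ j ih =>
    intro n hn
    rw [show n + (j+1)*L = (n + j*L) + L by ring, hp _ (by omega), ih n hn]

lemma per_reduce {γ : Type*} {f : ℕ → γ} {n₀ L : ℕ} (hL : 0 < L)
    (hp : ∀ n, n₀ ≤ n → f (n + L) = f n) :
    ∀ n, n₀ ≤ n → f n = f (n₀ + (n - n₀) % L) := by
  intro n
  induction n using Nat.strong_induction_on with
  | _ n ih =>
    intro hn
    by_cases h : n < n₀ + L
    · have h1 : (n - n₀) % L = n - n₀ := Nat.mod_eq_of_lt (by omega)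
      rw [h1, show n₀ + (n - n₀) = n by omega]
    · have h1 : f n = f (n - L) := by
        have := hp (n - L) (by omega)
        rw [show n - L + L = n by omega] at this
        exact this
      rw [h1, ih (n - L) (by omega) (by omega)]
      congr 1
      rw [show n - n₀ = (n - L - n₀) + L by omega, Nat.add_mod_right]

lemma sSup_freqSet_periodic {f : ℕ → ℕ} {n₀ L m : ℕ} (hL : 0 < L)
    (hp : ∀ n, n₀ ≤ n → f (n + L) = f n)
    (hm : ∃ i, i < L ∧ f (n₀ + i) = m)
    (hb : ∀ i, i < L → f (n₀ + i) ≤ m) :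
    sSup (freqSet f) = m := by
  apply sSup_eq_of_mem_of_le
  · obtain ⟨i, hi, he⟩ := hm
    rw [mem_freqSet]
    intro N
    refine ⟨n₀ + i + N * L, ?_, ?_⟩
    · have : N ≤ N * L := Nat.le_mul_of_pos_right _ hL
      omega
    · rw [per_iterate hp N _ (by omega), he]
  · intro r hr
    obtain ⟨n, hn, he⟩ := mem_freqSet.1 hr n₀
    rw [per_reduce hL hp n hn] at he
    have := hb ((n - n₀) % L) (Nat.mod_lt _ hL)
    omega

lemma freq_pigeon {ι : Type*} [Finite ι] {P : ℕ → Prop} (h : ∃ᶠ n in atTop, P n) (g : ℕ → ι) :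
    ∃ p, ∃ᶠ n in atTop, P n ∧ g n = p := by
  by_contra hc
  push_neg at hc
  have h2 : ∀ᶠ n in atTop, ∀ p, ¬(P n ∧ g n = p) := eventually_all.2 fun p => (hc p).mono fun n hn h => hn h.1 h.2
  obtain ⟨n, hPn, hall⟩ := (h.and_eventually h2).exists
  exact hall (g n) ⟨hPn, rfl⟩

lemma le_foldr_max {l : List ℕ} {x : ℕ} (h : x ∈ l) : x ≤ l.foldr max 0 := by
  induction l with
  | nil => cases h
  | cons a l ih =>
    rcases List.mem_cons.1 h with rfl | h
    · exact le_max_left _ _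
    · exact le_trans (ih h) (le_max_right _ _)

lemma foldr_max_mem {l : List ℕ} (h : l ≠ []) : l.foldr max 0 ∈ l := by
  induction l with
  | nil => exact absurd rfl h
  | cons a l ih =>
    cases l with
    | nil => simp
    | cons b l' =>
      rcases le_total a ((b::l').foldr max 0) with h' | h'
      · rw [List.foldr_cons, max_eq_right h']
        exact List.mem_cons_of_mem _ (ih (by simp))
      · rw [List.foldr_cons, max_eq_left h']
        exact List.mem_cons_self

end DW
namespace DW
open DPTA
variable {Alpha Q : Type} (M : DPTA Alpha Q)

/- ### pref lemmas -/
lemma pref_length (π : ℕ → Bool) (n : ℕ) : (pref π n).length = n := by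
  simp [pref]

lemma pref_getElem (π : ℕ → Bool) (n i : ℕ) (h : i < (pref π n).length) :
    (pref π n)[i] = π i := by
  simp [pref]

lemma pref_succ (π : ℕ → Bool) (n : ℕ) : pref π (n+1) = pref π n ++ [π n] := by
  apply List.ext_getElem (by simp [pref])
  intro i h1 h2
  rw [pref_getElem]
  rcases Nat.lt_or_ge i n with h | h
  · rw [List.getElem_append_left (by simpa [pref] using h), pref_getElem]
  · have hi : i = n := by
      have h3 := h1; rw [pref_length] at h3; omega
    subst hi
    rw [List.getElem_append_right (by simp [pref])]
    simp [pref]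

lemma pref_take (π : ℕ → Bool) {k n : ℕ} (h : k ≤ n) : (pref π n).take k = pref π k := by
  apply List.ext_getElem (by simp [pref]; omega)
  intro i h1 h2
  rw [List.getElem_take, pref_getElem, pref_getElem]

lemma prefix_pref {π : ℕ → Bool} {n : ℕ} {w : List Bool} (h : w <+: pref π n) :
    w = pref π w.length := by
  have hlen : w.length ≤ n := by
    have := h.length_le
    simpa [pref] using this
  conv_lhs => rw [List.prefix_iff_eq_take.1 h]
  exact pref_take _ hlen

lemma pref_append (π : ℕ → Bool) (n m : ℕ) :
    pref π (n + m) = pref π n ++ pref (fun k => π (n + k)) m := by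
  apply List.ext_getElem (by simp [pref])
  intro i h1 h2
  rw [pref_getElem]
  rcases Nat.lt_or_ge i n with h | h
  · rw [List.getElem_append_left (by simpa [pref] using h), pref_getElem]
  · rw [List.getElem_append_right (by simpa [pref] using h)]
    rw [pref_getElem]
    simp [pref]
    congr 1
    omega

/- ### runFrom lemmas -/
lemma runFrom_nil (q : Q) (t : List Bool → Alpha) : M.runFrom q t [] = q := rfl

lemma runFrom_cons (q : Q) (t : List Bool → Alpha) (d : Bool) (v : List Bool) :
    M.runFrom q t (d :: v) = M.runFrom (M.next q (t []) d) (fun u => t (d :: u)) v := rfl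

lemma runFrom_congr : ∀ (v : List Bool) (q : Q) (t t' : List Bool → Alpha),
    (∀ w : List Bool, w <+: v → w ≠ v → t w = t' w) →
    M.runFrom q t v = M.runFrom q t' v := by
  intro v
  induction v with
  | nil => intros; rfl
  | cons d v ih =>
    intro q t t' h
    rw [runFrom_cons, runFrom_cons, h [] (by simp) (by simp)]
    apply ih
    intro w hw hne
    exact h (d :: w) (by simpa using hw) (by simpa using hne)

lemma runFrom_append : ∀ (u : List Bool) (q : Q) (t : List Bool → Alpha) (v : List Bool),
    M.runFrom q t (u ++ v) = M.runFrom (M.runFrom q t u) (fun w => t (u ++ w)) v := by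
  intro u
  induction u with
  | nil => intros; rfl
  | cons d u ih =>
    intro q t v
    rw [List.cons_append, runFrom_cons, runFrom_cons, ih]
    rfl

lemma runFrom_snoc (q : Q) (t : List Bool → Alpha) (v : List Bool) (b : Bool) :
    M.runFrom q t (v ++ [b]) = M.next (M.runFrom q t v) (t v) b := by
  rw [runFrom_append, runFrom_cons, runFrom_nil, List.append_nil]

/- ### follow lemmas -/
lemma follow_nil (q : Q) : M.follow q [] = q := rfl

lemma follow_cons (q : Q) (s : Alpha × Bool) (l : List (Alpha × Bool)) :
    M.follow q (s :: l) = M.follow (M.next q s.1 s.2) l := rfl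

lemma follow_append (q : Q) (l l' : List (Alpha × Bool)) :
    M.follow q (l ++ l') = M.follow (M.follow q l) l' :=
  List.foldl_append

lemma follow_concat (q : Q) (l : List (Alpha × Bool)) (s : Alpha × Bool) :
    M.follow q (l ++ [s]) = M.next (M.follow q l) s.1 s.2 := by
  rw [follow_append]; rfl

/- ### statesOn / maxRankOn -/
lemma statesOn_cons (q : Q) (s : Alpha × Bool) (l : List (Alpha × Bool)) :
    M.statesOn q (s :: l) = q :: M.statesOn (M.next q s.1 s.2) l := by
  simp [statesOn, List.scanl_cons]

lemma mem_statesOn_iff {p q : Q} : ∀ {l : List (Alpha × Bool)},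
    (p ∈ M.statesOn q l ↔ ∃ i, i ≤ l.length ∧ M.follow q (l.take i) = p) := by
  intro l
  induction l generalizing q with
  | nil =>
    simp only [statesOn, List.scanl_nil, List.mem_singleton, List.length_nil]
    constructor
    · rintro rfl; exact ⟨0, le_refl 0, rfl⟩
    · rintro ⟨i, hi, hf⟩
      have hi0 : i = 0 := by omega
      subst hi0
      exact hf.symm
  | cons s l ih =>
    rw [statesOn_cons, List.mem_cons, ih]
    constructor
    · rintro (rfl | ⟨i, hi, hf⟩)
      · exact ⟨0, by simp [follow_nil]⟩
      · exact ⟨i + 1, by simpa using hi, by rw [List.take_succ_cons, follow_cons]; exact hf⟩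
    · rintro ⟨i, hi, hf⟩
      cases i with
      | zero => left; simp [follow_nil] at hf; exact hf.symm
      | succ i =>
        right
        exact ⟨i, by simpa using hi, by rw [List.take_succ_cons, follow_cons] at hf; exact hf⟩

lemma self_mem_statesOn (q : Q) (l : List (Alpha × Bool)) : q ∈ M.statesOn q l :=
  (mem_statesOn_iff M).2 ⟨0, Nat.zero_le _, rfl⟩

lemma statesOn_ne_nil (q : Q) (l : List (Alpha × Bool)) : M.statesOn q l ≠ [] :=
  List.ne_nil_of_length_pos (by rw [statesOn, List.length_scanl]; omega)

lemma rank_le_maxRankOn {p q : Q} {l : List (Alpha × Bool)} (h : p ∈ M.statesOn q l) :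
    M.rank p ≤ M.maxRankOn q l :=
  le_foldr_max (List.mem_map_of_mem h)

lemma exists_maxRankOn (q : Q) (l : List (Alpha × Bool)) :
    ∃ p ∈ M.statesOn q l, M.rank p = M.maxRankOn q l := by
  have h := foldr_max_mem (l := (M.statesOn q l).map M.rank)
    (by simp [statesOn_ne_nil])
  obtain ⟨p, hp, he⟩ := List.mem_map.1 (h)
  exact ⟨p, hp, he⟩

end DW
namespace DW
open DPTA Filter
variable {Alpha Q : Type} (M : DPTA Alpha Q)

lemma parityAccept_def (f : ℕ → ℕ) : ParityAccept f ↔ Even (sSup (freqSet f)) := Iff.rfl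

lemma parity_congr {f g : ℕ → ℕ} (h : ∀ᶠ n in atTop, f n = g n) :
    ParityAccept f ↔ ParityAccept g := by
  rw [parityAccept_def, parityAccept_def, freqSet_congr h]

lemma parity_shift (f : ℕ → ℕ) (k : ℕ) : ParityAccept (fun n => f (n + k)) ↔ ParityAccept f := by
  rw [parityAccept_def, parityAccept_def, freqSet_shift]

lemma parity_sub (f : ℕ → ℕ) (c : ℕ) : ParityAccept (fun n => f (n - c)) ↔ ParityAccept f := by
  rw [parityAccept_def, parityAccept_def, freqSet_sub]

lemma ofFn_take {γ : Type*} (σ : ℕ → γ) {m n : ℕ} (h : m ≤ n) :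
    (List.ofFn fun i : Fin n => σ i).take m = List.ofFn fun i : Fin m => σ i := by
  apply List.ext_getElem (by simp; omega)
  intro i h1 h2
  simp [List.getElem_take, List.getElem_ofFn]

lemma ofFn_succ_concat {γ : Type*} (σ : ℕ → γ) (n : ℕ) :
    (List.ofFn fun i : Fin (n+1) => σ i) = (List.ofFn fun i : Fin n => σ i) ++ [σ n] := by
  apply List.ext_getElem (by simp)
  intro i h1 h2
  rw [List.getElem_ofFn]
  rcases Nat.lt_or_ge i n with h | h
  · rw [List.getElem_append_left (by simpa using h), List.getElem_ofFn]
  · have hi : i = n := by simp at h1; omega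
    subst hi
    rw [List.getElem_append_right (by simp)]
    simp

def stOf (σ : ℕ → Alpha × Bool) (q : Q) (n : ℕ) : Q :=
  M.follow q (List.ofFn fun i : Fin n => σ i)

lemma stOf_zero (σ : ℕ → Alpha × Bool) (q : Q) : stOf M σ q 0 = q := rfl

lemma stOf_succ (σ : ℕ → Alpha × Bool) (q : Q) (n : ℕ) :
    stOf M σ q (n+1) = M.next (stOf M σ q n) (σ n).1 (σ n).2 := by
  unfold stOf
  rw [ofFn_succ_concat, follow_concat]

lemma stOf_per {σ : ℕ → Alpha × Bool} {q : Q} {n₀ L : ℕ}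
    (hσ : ∀ n, n₀ ≤ n → σ (n + L) = σ n)
    (hst : stOf M σ q (n₀ + L) = stOf M σ q n₀) :
    ∀ n, n₀ ≤ n → stOf M σ q (n + L) = stOf M σ q n := by
  intro n hn
  obtain ⟨m, rfl⟩ : ∃ m, n = n₀ + m := ⟨n - n₀, by omega⟩
  clear hn
  induction m with
  | zero => exact hst
  | succ m ih =>
    have e1 : n₀ + (m+1) + L = (n₀ + m + L) + 1 := by ring
    have e2 : n₀ + (m+1) = (n₀ + m) + 1 := by ring
    rw [e1, e2, stOf_succ, stOf_succ, ih, hσ _ (by omega)]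

lemma follow_run (t : List Bool → Alpha) (π : ℕ → Bool) (q : Q) (i : ℕ) :
    ∀ n, M.follow (M.runFrom q t (pref π i))
        (List.ofFn fun k : Fin n => (t (pref π (i+(k:ℕ))), π (i+(k:ℕ)))) =
      M.runFrom q t (pref π (i+n)) := by
  intro n
  induction n with
  | zero => simp [follow_nil]
  | succ n ih =>
    rw [ofFn_succ_concat (fun k => (t (pref π (i+k)), π (i+k))) n, follow_concat, ih,
      show i + (n+1) = (i+n)+1 by ring, pref_succ, runFrom_snoc]

lemma tail_parity {t : List Bool → Alpha} {q : Q} {π : ℕ → Bool} {v : List Bool}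
    (hv : pref π v.length = v)
    (ha : M.AcceptsFrom (M.runFrom q t v) (fun u => t (v ++ u))) :
    ParityAccept fun m => M.rank (M.runFrom q t (pref π m)) := by
  set n := v.length with hn
  have key : ∀ m, M.runFrom q t (pref π (n + m)) =
      M.runFrom (M.runFrom q t v) (fun u => t (v ++ u)) (pref (fun k => π (n+k)) m) := by
    intro m
    rw [pref_append, hv, runFrom_append]
  have hg := ha (fun k => π (n + k))
  set g : ℕ → ℕ := fun m =>
    M.rank (M.runFrom (M.runFrom q t v) (fun u => t (v ++ u)) (pref (fun k => π (n+k)) m)) with hgdef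
  have h2 : ParityAccept (fun m => g (m - n)) := (parity_sub g n).2 hg
  have h3 : ∀ᶠ m in atTop, g (m - n) = M.rank (M.runFrom q t (pref π m)) := by
    filter_upwards [eventually_ge_atTop n] with m hm
    rw [hgdef]
    simp only
    rw [← key (m - n), show n + (m - n) = m by omega]
  exact (parity_congr h3).1 h2

lemma acceptsFrom_subtree {t : List Bool → Alpha} {q : Q} (v : List Bool)
    (h : M.AcceptsFrom q t) :
    M.AcceptsFrom (M.runFrom q t v) (fun u => t (v ++ u)) := by
  intro σ
  set n := v.length with hn
  set π : ℕ → Bool := fun m => if hm : m < n then v[m] else σ (m - n) with hπ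
  have hv : pref π n = v := by
    apply List.ext_getElem (by simp [pref_length, hn])
    intro i h1 h2
    rw [pref_getElem, hπ]
    simp only
    rw [dif_pos (by omega : i < n)]
  have hshift : (fun k => π (n + k)) = σ := by
    funext k
    rw [hπ]
    simp only
    rw [dif_neg (by omega), Nat.add_sub_cancel_left]
  have key : ∀ m, M.runFrom q t (pref π (n + m)) =
      M.runFrom (M.runFrom q t v) (fun u => t (v ++ u)) (pref σ m) := by
    intro m
    rw [pref_append, hshift, hv, runFrom_append]
  have hf := h π
  have he : (fun m => M.rank (M.runFrom (M.runFrom q t v) (fun u => t (v ++ u)) (pref σ m)))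
       = fun m => M.rank (M.runFrom q t (pref π (m + n))) := by
    funext m
    rw [add_comm m n, key]
  show ParityAccept (fun m => M.rank (M.runFrom (M.runFrom q t v) (fun u => t (v ++ u)) (pref σ m)))
  rw [he]
  exact (parity_shift _ n).2 hf

end DW
namespace DW
open DPTA Filter
variable {Alpha Q : Type} (M : DPTA Alpha Q)

def Safe (q : Q) : Prop := ∀ t, M.AcceptsFrom q t

lemma safe_step {q : Q} (h : Safe M q) (s : Alpha) (b : Bool) : Safe M (M.next q s b) := by
  intro t'' π''
  set T : List Bool → Alpha := fun u => match u with
    | [] => s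
    | _ :: u' => t'' u' with hT
  set π : ℕ → Bool := fun m => if m = 0 then b else π'' (m - 1) with hπ
  have hf := h T π
  have hs : (fun u => T (b :: u)) = t'' := by funext u; rfl
  have key : ∀ m, M.runFrom q T (pref π (1 + m)) =
      M.runFrom (M.next q s b) t'' (pref π'' m) := by
    intro m
    rw [pref_append]
    have h1 : pref π 1 = [b] := by
      apply List.ext_getElem (by simp [pref_length])
      intro i h1 h2
      rw [pref_getElem]
      have : i = 0 := by rw [pref_length] at h1; omega
      subst this
      simp [hπ]
    have h2 : (fun k => π (1 + k)) = π'' := by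
      funext k
      simp [hπ, Nat.add_comm 1 k]
    rw [h1, h2, runFrom_append]
    have h3 : M.runFrom q T [b] = M.next q s b := by
      rw [show ([b] : List Bool) = [] ++ [b] by simp, runFrom_snoc, runFrom_nil]
    rw [h3]
    congr 1
  have he : (fun m => M.rank (M.runFrom (M.next q s b) t'' (pref π'' m)))
      = fun m => M.rank (M.runFrom q T (pref π (m + 1))) := by
    funext m
    rw [add_comm m 1, key]
  show ParityAccept (fun m => M.rank (M.runFrom (M.next q s b) t'' (pref π'' m)))
  rw [he]
  exact (parity_shift _ 1).2 hf

lemma safe_runFrom {q : Q} (h : Safe M q) : ∀ (v : List Bool) (t : List Bool → Alpha),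
    Safe M (M.runFrom q t v) := by
  have : ∀ (v : List Bool) (q : Q), Safe M q → ∀ t, Safe M (M.runFrom q t v) := by
    intro v
    induction v with
    | nil => intro q hq t; exact hq
    | cons d v ih =>
      intro q hq t
      rw [runFrom_cons]
      exact ih _ (safe_step M hq _ _) _
  intro v t
  exact this v q h t

lemma loop_extract [Fintype Q] (t : List Bool → Alpha) (π : ℕ → Bool) (q' : Q) :
    ∃ p i acc steps, M.follow q' acc = p ∧ M.runFrom q' t (pref π i) = p ∧
      M.IsLoop p steps ∧
      M.maxRankOn p steps = sSup (freqSet (fun n => M.rank (M.runFrom q' t (pref π n)))) := by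
  set g : ℕ → Q := fun n => M.runFrom q' t (pref π n) with hg
  set f : ℕ → ℕ := fun n => M.rank (g n) with hf
  set R := sSup (freqSet f) with hR
  have hbdd : BddAbove (freqSet f) := by
    refine ⟨Finset.univ.sup M.rank, ?_⟩
    intro r hr
    obtain ⟨n, _, he⟩ := mem_freqSet.1 hr 0
    rw [← he]
    exact Finset.le_sup (Finset.mem_univ (g n))
  have hne : (freqSet f).Nonempty := by
    obtain ⟨p₀, hp₀⟩ := freq_pigeon (frequently_const.2 trivial : ∃ᶠ _ in atTop, True) g
    exact ⟨M.rank p₀, hp₀.mono fun n hn => by rw [hf]; simp only; rw [hn.2]⟩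
  have hmem : R ∈ freqSet f := Nat.sSup_mem hne hbdd
  have hev : ∀ᶠ n in atTop, f n ≤ R := by
    by_contra hc
    rw [not_eventually] at hc
    obtain ⟨p₁, hp₁⟩ := freq_pigeon (hc.mono fun n hn => Nat.lt_of_not_le hn) g
    have h1 : M.rank p₁ ∈ freqSet f := hp₁.mono fun n hn => by rw [hf]; simp only; rw [hn.2]
    have h2 : R < M.rank p₁ := by
      obtain ⟨n, hn1, hn2⟩ := hp₁.exists
      rw [hf] at hn1
      simp only at hn1
      rw [hn2] at hn1
      exact hn1
    exact absurd (le_csSup hbdd h1) (not_le.2 h2)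
  obtain ⟨N, hN⟩ := eventually_atTop.1 hev
  have hfr : ∃ᶠ n in atTop, f n = R ∧ N ≤ n :=
    (hmem : ∃ᶠ n in atTop, f n = R).and_eventually (eventually_ge_atTop N)
  obtain ⟨p, hp⟩ := freq_pigeon hfr g
  obtain ⟨i, ⟨⟨hfi, hNi⟩, hgi⟩⟩ := hp.exists
  obtain ⟨j, hj, ⟨⟨hfj, _⟩, hgj⟩⟩ := frequently_atTop.1 hp (i + 1)
  set steps : List (Alpha × Bool) :=
    List.ofFn fun k : Fin (j - i) => (t (pref π (i+(k:ℕ))), π (i+(k:ℕ))) with hsteps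
  set acc : List (Alpha × Bool) :=
    List.ofFn fun k : Fin i => (t (pref π ((k:ℕ))), π ((k:ℕ))) with hacc
  have hacc1 : M.follow q' acc = g i := by
    have := follow_run M t π q' 0 i
    simp only [Nat.zero_add] at this
    rw [hacc]
    convert this using 2
    rfl
  have hfollow : M.follow p steps = g j := by
    have := follow_run M t π q' i (j - i)
    rw [show i + (j - i) = j by omega] at this
    rw [hsteps, ← hgi]
    exact this
  have htake : ∀ m, m ≤ j - i → M.follow p (steps.take m) = g (i + m) := by
    intro m hm
    rw [hsteps, ofFn_take (fun k : ℕ => (t (pref π (i+k)), π (i+k))) hm, ← hgi]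
    exact follow_run M t π q' i m
  refine ⟨p, i, acc, steps, by rw [hacc1, hgi], hgi, ⟨?_, by rw [hfollow, hgj]⟩, ?_⟩
  · intro hnil
    have := congrArg List.length hnil
    simp [hsteps] at this
    omega
  · apply le_antisymm
    · obtain ⟨x, hx, hxr⟩ := exists_maxRankOn M p steps
      rw [← hxr]
      obtain ⟨m, hm, hfoll⟩ := (mem_statesOn_iff M).1 hx
      rw [hsteps] at hm
      simp only [List.length_ofFn] at hm
      rw [← hfoll, htake m hm]
      exact hN (i + m) (by omega)
    · have hpmem : p ∈ M.statesOn p steps := self_mem_statesOn M p steps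
      have : M.rank p = R := by rw [← hgi]; exact hfi
      rw [← this]
      exact rank_le_maxRankOn M hpmem
end DW
namespace DW
open DPTA Filter
variable {Alpha Q : Type} (M : DPTA Alpha Q)

lemma open_of_no_flower [Fintype Q] [TopologicalSpace Alpha] [DiscreteTopology Alpha]
    (h : ¬ HasWeakFlower M 0 1) : IsOpen M.Lang := by
  rw [isOpen_iff_mem_nhds]
  intro t ht
  have ht' : M.AcceptsFrom M.init t := ht
  have hsafe : ∃ n, ∀ v : List Bool, v.length = n → Safe M (M.run t v) := by
    by_contra hc
    push_neg at hc
    -- build an infinite path of unsafe states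
    have hA0 : ∀ m, ∃ u : List Bool, u.length = m ∧ ¬ Safe M (M.run t ([] ++ u)) := by
      intro m
      obtain ⟨v, hv, hns⟩ := hc m
      exact ⟨v, hv, by simpa using hns⟩
    have step : ∀ v : List Bool,
        (∀ m, ∃ u : List Bool, u.length = m ∧ ¬ Safe M (M.run t (v ++ u))) →
        ∃ b : Bool, ∀ m, ∃ u : List Bool, u.length = m ∧ ¬ Safe M (M.run t ((v ++ [b]) ++ u)) := by
      intro v hA
      by_contra hcb
      push_neg at hcb
      obtain ⟨m0, h0⟩ := hcb false
      obtain ⟨m1, h1⟩ := hcb true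
      obtain ⟨u, hu, hns⟩ := hA (max m0 m1 + 1)
      cases u with
      | nil => simp at hu
      | cons b u' =>
        have hlen : u'.length = max m0 m1 := by simpa using hu
        have contra : ∀ mb : ℕ, mb ≤ u'.length →
            Safe M (M.run t ((v ++ [b]) ++ u'.take mb)) → False := by
          intro mb hmb hsafe
          apply hns
          have hsplit : v ++ b :: u' = ((v ++ [b]) ++ u'.take mb) ++ u'.drop mb := by
            rw [List.append_assoc (v ++ [b]), List.take_append_drop]
            simp
          show Safe M (M.runFrom M.init t (v ++ b :: u'))
          rw [hsplit, runFrom_append]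
          exact safe_runFrom M hsafe _ _
        cases b
        · exact contra m0 (by omega) (h0 _ (by rw [List.length_take]; omega))
        · exact contra m1 (by omega) (h1 _ (by rw [List.length_take]; omega))
    choose bs hbs using step
    let P : List Bool → Prop := fun v => ∀ m, ∃ u : List Bool, u.length = m ∧ ¬ Safe M (M.run t (v ++ u))
    let F : ℕ → {v : List Bool // P v} :=
      fun n => Nat.rec ⟨[], hA0⟩ (fun _ p => ⟨p.1 ++ [bs p.1 p.2], hbs p.1 p.2⟩) n
    have hF : ∀ n, (F (n+1)).1 = (F n).1 ++ [bs (F n).1 (F n).2] := fun n => rfl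
    have hFlen : ∀ n, (F n).1.length = n := by
      intro n
      induction n with
      | zero => rfl
      | succ n ih => rw [hF, List.length_append, ih]; rfl
    set π : ℕ → Bool := fun n => ((F (n+1)).1).getD n false with hπ
    have hpref : ∀ n, pref π n = (F n).1 := by
      intro n
      induction n with
      | zero =>
        have : (F 0).1 = [] := rfl
        rw [this]
        rfl
      | succ n ih =>
        rw [pref_succ, ih, hF]
        congr 1
        have h1 : (F (n+1)).1[n]? = some (bs (F n).1 (F n).2) := by
          rw [hF, List.getElem?_append_right (le_of_eq (hFlen n)), hFlen]
          simp
        have hgd : π n = bs (F n).1 (F n).2 := by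
          show ((F (n+1)).1).getD n false = _
          rw [List.getD_eq_getElem?_getD, h1]
          rfl
        rw [hgd]
    have hunsafe : ∀ n, ¬ Safe M (M.run t (pref π n)) := by
      intro n
      obtain ⟨u, hu0, hns⟩ := (F n).2 0
      rw [List.length_eq_zero_iff] at hu0
      subst hu0
      rw [List.append_nil] at hns
      rw [hpref]
      exact hns
    obtain ⟨p, i, acc0, lam0, _, hgi, hloop0, hmax0⟩ := loop_extract M t π M.init
    have hacc := ht' π
    have heven : Even (M.maxRankOn p lam0) := by rw [hmax0]; exact hacc
    have hpunsafe : ¬ Safe M p := by rw [← hgi]; exact hunsafe i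
    unfold Safe at hpunsafe
    push_neg at hpunsafe
    obtain ⟨t2, ht2⟩ := hpunsafe
    unfold DPTA.AcceptsFrom at ht2
    push_neg at ht2
    obtain ⟨π2, hπ2⟩ := ht2
    obtain ⟨p', i', acc1, lam1, hacc1, _, hloop1, hmax1⟩ := loop_extract M t2 π2 p
    have hodd : ¬ Even (M.maxRankOn p' lam1) := by rw [hmax1]; exact hπ2
    apply h
    refine ⟨fun j => if j = 0 then p else p', fun j => if j = 0 then lam0 else lam1, ?_, ?_⟩
    · intro j hj0 hj1
      interval_cases j
      · simp only [if_pos rfl]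
        exact ⟨hloop0, iff_of_true heven Even.zero⟩
      · simp only [if_neg (by norm_num : (1:ℕ) ≠ 0)]
        exact ⟨hloop1, iff_of_false hodd (by simpa using Nat.not_even_one)⟩
    · intro j hj0 hj1
      have hj : j = 0 := by omega
      subst hj
      simp only [if_pos rfl, if_neg (by norm_num : (1:ℕ) ≠ 0)]
      exact ⟨p, self_mem_statesOn M p lam0, p', self_mem_statesOn M p' lam1, acc1, hacc1⟩
  obtain ⟨n, hn⟩ := hsafe
  rw [mem_nhds_iff]
  refine ⟨{t' | ∀ v : List Bool, v.length < n → t' v = t v}, ?_, ?_, ?_⟩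
  · intro t' ht'agree
    show M.AcceptsFrom M.init t'
    intro π
    have hrun : M.runFrom M.init t' (pref π n) = M.runFrom M.init t (pref π n) := by
      apply runFrom_congr
      intro w hw hne
      apply ht'agree
      have h1 : w.length ≤ (pref π n).length := hw.length_le
      have h2 : w.length ≠ (pref π n).length := fun he => hne (hw.eq_of_length he)
      rw [pref_length] at h1 h2
      omega
    apply tail_parity M (v := pref π n)
    · rw [pref_length]
    · rw [hrun]
      exact hn (pref π n) (pref_length π n) _
  · have hfin : {v : List Bool | v.length < n}.Finite := List.finite_length_lt Bool n
    have heq : {t' : List Bool → Alpha | ∀ v : List Bool, v.length < n → t' v = t v}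
        = ⋂ v ∈ {v : List Bool | v.length < n}, {t' : List Bool → Alpha | t' v = t v} := by
      ext t'
      simp only [Set.mem_setOf_eq, Set.mem_iInter]
    rw [heq]
    apply hfin.isOpen_biInter
    intro v _
    have hpre : {t' : List Bool → Alpha | t' v = t v}
        = (fun t' : List Bool → Alpha => t' v) ⁻¹' {t v} := rfl
    rw [hpre]
    exact (continuous_apply v).isOpen_preimage _ (isOpen_discrete _)
  · intro v _
    rfl
end DW
namespace DW
open DPTA Filter
variable {Alpha Q : Type}

def spineTree : (ℕ → Bool) → (ℕ → Alpha) → (ℕ → List Bool → Alpha) → List Bool → Alpha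
  | _, a, _, [] => a 0
  | d, a, off, b :: u =>
    if b = d 0 then spineTree (fun n => d (n+1)) (fun n => a (n+1)) (fun n => off (n+1)) u
    else off 0 u

lemma spineTree_cons (d : ℕ → Bool) (a : ℕ → Alpha) (off : ℕ → List Bool → Alpha)
    (b : Bool) (u : List Bool) :
    spineTree d a off (b :: u) =
      if b = d 0 then spineTree (fun n => d (n+1)) (fun n => a (n+1)) (fun n => off (n+1)) u
      else off 0 u := rfl

lemma spine_letter : ∀ (n : ℕ) (d : ℕ → Bool) (a : ℕ → Alpha) (off : ℕ → List Bool → Alpha),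
    spineTree d a off (List.ofFn fun i : Fin n => d i) = a n := by
  intro n
  induction n with
  | zero => intro d a off; rfl
  | succ n ih =>
    intro d a off
    rw [List.ofFn_succ]
    simp only [Fin.val_zero, Fin.val_succ]
    rw [spineTree_cons, if_pos rfl]
    exact ih _ _ _

lemma spine_off : ∀ (n : ℕ) (d : ℕ → Bool) (a : ℕ → Alpha) (off : ℕ → List Bool → Alpha)
    (u : List Bool),
    spineTree d a off ((List.ofFn fun i : Fin n => d i) ++ (!(d n)) :: u) = off n u := by
  intro n
  induction n with
  | zero =>
    intro d a off u
    rw [List.ofFn_zero, List.nil_append, spineTree_cons, if_neg (by simp)]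
  | succ n ih =>
    intro d a off u
    rw [List.ofFn_succ]
    simp only [Fin.val_zero, Fin.val_succ]
    rw [List.cons_append, spineTree_cons, if_pos rfl]
    exact ih _ _ _ _

variable (M : DPTA Alpha Q)

lemma spine_run : ∀ (n : ℕ) (q : Q) (d : ℕ → Bool) (a : ℕ → Alpha)
    (off : ℕ → List Bool → Alpha),
    M.runFrom q (spineTree d a off) (List.ofFn fun i : Fin n => d i)
      = M.follow q (List.ofFn fun i : Fin n => (a i, d i)) := by
  intro n
  induction n with
  | zero => intro q d a off; rfl
  | succ n ih =>
    intro q d a off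
    rw [List.ofFn_succ (f := fun i : Fin (n+1) => d i)]
    simp only [Fin.val_zero, Fin.val_succ]
    rw [runFrom_cons]
    have h2 : (fun u => spineTree d a off (d 0 :: u))
        = spineTree (fun n => d (n+1)) (fun n => a (n+1)) (fun n => off (n+1)) := by
      funext u
      rw [spineTree_cons, if_pos rfl]
    rw [h2]
    have h3 := ih (M.next q (spineTree d a off []) (d 0)) (fun n => d (n+1)) (fun n => a (n+1))
      (fun n => off (n+1))
    rw [h3]
    conv_rhs => rw [List.ofFn_succ (f := fun i : Fin (n+1) => ((a i : Alpha), (d i : Bool)))]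
    simp only [Fin.val_zero, Fin.val_succ]
    rw [follow_cons]
    rfl

def graft (t : List Bool → Alpha) (v : List Bool) (s : List Bool → Alpha) : List Bool → Alpha :=
  fun u => if v <+: u then s (u.drop v.length) else t u

lemma graft_not_prefix {t s : List Bool → Alpha} {v u : List Bool} (h : ¬ v <+: u) :
    graft t v s u = t u := if_neg h

lemma graft_subtree (t : List Bool → Alpha) (v : List Bool) (s : List Bool → Alpha) :
    (fun u => graft t v s (v ++ u)) = s := by
  funext u
  unfold graft
  rw [if_pos (List.prefix_append v u), List.drop_left]

lemma not_prefix_of_proper {v w : List Bool} (hw : w <+: v) (hne : w ≠ v) : ¬ v <+: w := by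
  intro h
  exact hne (hw.eq_of_length (le_antisymm hw.length_le h.length_le))

lemma runFrom_graft_eq (q : Q) (t : List Bool → Alpha) (v : List Bool) (s : List Bool → Alpha) :
    M.runFrom q (graft t v s) v = M.runFrom q t v :=
  runFrom_congr M v q _ _ (fun _ hw hne => graft_not_prefix (not_prefix_of_proper hw hne))

lemma graft_accepts {t s : List Bool → Alpha} {v : List Bool} {q : Q}
    (ht : M.AcceptsFrom q t) (hs : M.AcceptsFrom (M.runFrom q t v) s) :
    M.AcceptsFrom q (graft t v s) := by
  intro π
  by_cases hev : pref π v.length = v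
  · apply tail_parity M hev
    rw [graft_subtree, runFrom_graft_eq]
    exact hs
  · have hnp : ∀ m, ¬ v <+: pref π m := by
      intro m hvp
      exact hev (prefix_pref hvp).symm
    have he : (fun m => M.rank (M.runFrom q (graft t v s) (pref π m)))
        = fun m => M.rank (M.runFrom q t (pref π m)) := by
      funext m
      congr 1
      apply runFrom_congr
      intro w hw _
      apply graft_not_prefix
      intro hvw
      exact hnp m (hvw.trans hw)
    show ParityAccept (fun m => M.rank (M.runFrom q (graft t v s) (pref π m)))
    rw [he]
    exact ht π

lemma follow_fixed {b : Q} (hb : ∀ s, M.delta b s = (b, b)) : ∀ l, M.follow b l = b := by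
  intro l
  induction l with
  | nil => rfl
  | cons s l ih =>
    rw [follow_cons]
    have hn : M.next b s.1 s.2 = b := by cases s.2 <;> simp [DPTA.next, hb]
    rw [hn]
    exact ih

lemma runFrom_fixed {b : Q} (hb : ∀ s, M.delta b s = (b, b)) :
    ∀ (v : List Bool) (t : List Bool → Alpha), M.runFrom b t v = b := by
  intro v
  induction v with
  | nil => intro t; rfl
  | cons d v ih =>
    intro t
    rw [runFrom_cons]
    have hn : M.next b (t []) d = b := by cases d <;> simp [DPTA.next, hb]
    rw [hn]
    exact ih _

lemma accepts_fixed {b : Q} (hb : ∀ s, M.delta b s = (b, b)) (heven : Even (M.rank b))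
    (t : List Bool → Alpha) : M.AcceptsFrom b t := by
  intro π
  have he : (fun n => M.rank (M.runFrom b t (pref π n))) = fun _ => M.rank b := by
    funext n
    rw [runFrom_fixed M hb]
  show ParityAccept (fun n => M.rank (M.runFrom b t (pref π n)))
  rw [he, parityAccept_def]
  have hs : sSup (freqSet fun _ => M.rank b) = M.rank b := by
    apply sSup_eq_of_mem_of_le
    · exact mem_freqSet.2 fun N => ⟨N, le_rfl, rfl⟩
    · intro r hr
      obtain ⟨n, _, hn⟩ := mem_freqSet.1 hr 0
      omega
  rw [hs]
  exact heven

lemma loop_no_bot [Nonempty Alpha] {qb p : Q} {lam : List (Alpha × Bool)}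
    (hloop : M.IsLoop qb lam) (heven : Even (M.maxRankOn qb lam))
    (hmem : p ∈ M.statesOn qb lam)
    (hrej : M.AllRejecting p) (hfix : ∀ s, M.delta p s = (p, p)) : False := by
  obtain ⟨i, hi, hfoll⟩ := (mem_statesOn_iff M).1 hmem
  have hq : qb = p := by
    have h1 : M.follow qb lam = qb := hloop.2
    rw [← List.take_append_drop i lam, follow_append, hfoll, follow_fixed M hfix] at h1
    exact h1.symm
  subst hq
  obtain ⟨x, hx, hxr⟩ := exists_maxRankOn M qb lam
  have hxq : x = qb := by
    obtain ⟨m, hm, hf⟩ := (mem_statesOn_iff M).1 hx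
    rw [← hf, follow_fixed M hfix]
  rw [hxq] at hxr
  rw [← hxr] at heven
  exact hrej _ (accepts_fixed M hfix heven (fun _ => Classical.arbitrary Alpha))

lemma sSup_eq_maxRankOn {f : ℕ → ℕ} {n₀ : ℕ} {qb : Q} {lam : List (Alpha × Bool)}
    (hlam : lam ≠ [])
    (hp : ∀ n, n₀ ≤ n → f (n + lam.length) = f n)
    (hw : ∀ i, i ≤ lam.length → f (n₀ + i) = M.rank (M.follow qb (lam.take i)))
    (hloop : M.follow qb lam = qb) :
    sSup (freqSet f) = M.maxRankOn qb lam := by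
  have hL : 0 < lam.length := List.length_pos_iff.2 hlam
  apply sSup_freqSet_periodic hL hp
  · obtain ⟨p, hpmem, hpr⟩ := exists_maxRankOn M qb lam
    obtain ⟨i, hi, hfoll⟩ := (mem_statesOn_iff M).1 hpmem
    rcases Nat.lt_or_ge i lam.length with hlt | hge
    · exact ⟨i, hlt, by rw [hw i (le_of_lt hlt), hfoll, hpr]⟩
    · have hi' : i = lam.length := by omega
      refine ⟨0, hL, ?_⟩
      rw [hw 0 (Nat.zero_le _), List.take_zero, follow_nil]
      have hpq : p = qb := by rw [← hfoll, hi', List.take_length, hloop]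
      rw [← hpr, hpq]
  · intro i hi
    rw [hw i (le_of_lt hi)]
    exact rank_le_maxRankOn M ((mem_statesOn_iff M).2 ⟨i, le_of_lt hi, rfl⟩)

end DW
namespace DW
open DPTA Filter
variable {Alpha Q : Type} (M : DPTA Alpha Q)

lemma spine_accepts (d : ℕ → Bool) (a : ℕ → Alpha) (off : ℕ → List Bool → Alpha) (q : Q)
    (hoff : ∀ k, M.AcceptsFrom
      (M.next (M.follow q (List.ofFn fun i : Fin k => (a i, d i))) (a k) (!(d k))) (off k))
    (hspine : ParityAccept fun n => M.rank (M.follow q (List.ofFn fun i : Fin n => (a i, d i)))) :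
    M.AcceptsFrom q (spineTree d a off) := by
  intro π
  by_cases hall : ∀ n, π n = d n
  · have hπd : π = d := funext hall
    subst hπd
    have he : (fun n => M.rank (M.runFrom q (spineTree π a off) (pref π n)))
        = fun n => M.rank (M.follow q (List.ofFn fun i : Fin n => (a i, π i))) := by
      funext n
      have h0 : pref π n = List.ofFn fun i : Fin n => π i := rfl
      rw [h0, spine_run]
    show ParityAccept (fun n => M.rank (M.runFrom q (spineTree π a off) (pref π n)))
    rw [he]
    exact hspine
  · push_neg at hall
    set k := Nat.find hall with hkdef
    have hπk : π k ≠ d k := Nat.find_spec hall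
    have hvk : ∀ i, i < k → π i = d i := fun i hi => not_not.1 (Nat.find_min hall hi)
    have hv : pref π (k+1) = (List.ofFn fun i : Fin k => d i) ++ [!(d k)] := by
      apply List.ext_getElem (by simp [pref_length])
      intro i h1 h2
      rw [pref_getElem]
      rcases Nat.lt_or_ge i k with h | h
      · rw [List.getElem_append_left (by simpa using h), List.getElem_ofFn]
        exact hvk i h
      · have hik : i = k := by rw [pref_length] at h1; omega
        subst hik
        rw [List.getElem_append_right (by simp)]
        simp only [List.length_ofFn, Nat.sub_self, List.getElem_cons_zero]
        revert hπk
        cases π k <;> cases d k <;> simp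
    apply tail_parity M (v := pref π (k+1)) (by rw [pref_length])
    have hstate : M.runFrom q (spineTree d a off) (pref π (k+1))
        = M.next (M.follow q (List.ofFn fun i : Fin k => (a i, d i))) (a k) (!(d k)) := by
      rw [hv, runFrom_snoc, spine_run, spine_letter]
    have hsub : (fun u => spineTree d a off (pref π (k+1) ++ u)) = off k := by
      funext u
      rw [hv, List.append_assoc, List.singleton_append]
      exact spine_off k d a off u
    rw [hstate, hsub]
    exact hoff k
end DW
namespace DW
open DPTA Filter
variable {Alpha Q : Type} (M : DPTA Alpha Q)

lemma flower_not_open [Fintype Q] [Nonempty Alpha] [TopologicalSpace Alpha]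
    [DiscreteTopology Alpha] (hM : M.Normalized) (hfl : HasWeakFlower M 0 1) :
    ¬ IsOpen M.Lang := by
  obtain ⟨qf, lamf, h1, h2⟩ := hfl
  obtain ⟨hloop0, hpar0⟩ := h1 0 (le_refl 0) (by norm_num)
  obtain ⟨hloop1, hpar1⟩ := h1 1 (by norm_num) (le_refl 1)
  obtain ⟨s, hs, s', hs', c, hc⟩ := h2 0 (le_refl 0) (by norm_num)
  set q0 := qf 0 with hq0
  set q1 := qf 1 with hq1
  set lam0 := lamf 0 with hlam0
  set lam1 := lamf 1 with hlam1
  have heven : Even (M.maxRankOn q0 lam0) := hpar0.mpr Even.zero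
  have hodd : ¬ Even (M.maxRankOn q1 lam1) := fun he => by simpa using hpar1.mp he
  have hL0 : 0 < lam0.length := List.length_pos_iff.2 hloop0.1
  have hL1 : 0 < lam1.length := List.length_pos_iff.2 hloop1.1
  obtain ⟨k, hk, hks⟩ := (mem_statesOn_iff M).1 hs
  obtain ⟨k', hk', hks'⟩ := (mem_statesOn_iff M).1 hs'
  obtain ⟨hreach, bot, hprodQ, hbotQ, htrans⟩ := hM
  set L0 := lam0.length with hL0def
  set σ0 : ℕ → Alpha × Bool := fun n => lam0[n % L0]'(Nat.mod_lt n hL0) with hσ0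
  set d : ℕ → Bool := fun n => (σ0 n).2 with hd
  set a : ℕ → Alpha := fun n => (σ0 n).1 with ha
  -- basic facts about the cyclic spine of lam0
  have hofn : ∀ n, n ≤ L0 → (List.ofFn fun i : Fin n => σ0 i) = lam0.take n := by
    intro n hn
    apply List.ext_getElem (by simp [hL0def]; omega)
    intro i hi1 hi2
    rw [List.getElem_ofFn, List.getElem_take]
    simp only [hσ0]
    congr 1
    rw [Nat.mod_eq_of_lt (by simp at hi1; omega)]
  have hstL0 : stOf M σ0 q0 L0 = q0 := by
    show M.follow q0 _ = q0
    rw [hofn L0 le_rfl]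
    rw [show lam0.take L0 = lam0 from List.take_length (l := lam0)]
    exact hloop0.2
  have hstper : ∀ n, stOf M σ0 q0 (n + L0) = stOf M σ0 q0 n := by
    intro n
    refine stOf_per M (n₀ := 0) ?_ ?_ n (Nat.zero_le n)
    · intro m _
      simp only [hσ0]
      congr 1
      rw [Nat.add_mod_right]
    · rw [Nat.zero_add, hstL0, stOf_zero]
  have hstmod : ∀ n, stOf M σ0 q0 n = M.follow q0 (lam0.take (n % L0)) := by
    intro n
    have hred := per_reduce (n₀ := 0) hL0 (fun m _ => hstper m) n (Nat.zero_le n)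
    rw [hred]
    simp only [Nat.zero_add, Nat.sub_zero]
    show M.follow q0 _ = _
    rw [hofn _ (le_of_lt (Nat.mod_lt n hL0))]
  have hstmem : ∀ n, stOf M σ0 q0 n ∈ M.statesOn q0 lam0 := fun n =>
    (mem_statesOn_iff M).2 ⟨n % L0, le_of_lt (Nat.mod_lt n hL0), (hstmod n).symm⟩
  -- no state on the accepting loop is the bottom state
  have hnotbot : ∀ p ∈ M.statesOn q0 lam0, some p ≠ bot := by
    intro p hp hpb
    obtain ⟨hrej, hfix⟩ := hbotQ p hpb
    exact loop_no_bot M hloop0 heven hp hrej hfix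
  have hptrans : ∀ n, M.ProductiveTrans (stOf M σ0 q0 n) (a n) := by
    intro n
    rcases htrans (stOf M σ0 q0 n) (a n) with h | ⟨hb1, hb2⟩
    · exact h
    · exfalso
      have hnext : M.next (stOf M σ0 q0 n) (a n) (d n) = stOf M σ0 q0 (n+1) :=
        (stOf_succ M σ0 q0 n).symm
      have hbotnext : some (stOf M σ0 q0 (n+1)) = bot := by
        rw [← hnext]
        cases hdn : d n
        · simpa [DPTA.next] using hb1
        · simpa [DPTA.next] using hb2
      exact hnotbot _ (hstmem (n+1)) hbotnext
  -- accepting off-spine trees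
  have hoffex : ∀ n, ∃ s0 : List Bool → Alpha,
      M.AcceptsFrom (M.next (stOf M σ0 q0 n) (a n) (!(d n))) s0 := by
    intro n
    obtain ⟨T, hT, v, hrunv, hTv⟩ := hptrans n
    refine ⟨fun u => T ((v ++ [!(d n)]) ++ u), ?_⟩
    have hsub := acceptsFrom_subtree M (v ++ [!(d n)]) (hT : M.AcceptsFrom M.init T)
    have hrunv' : M.runFrom M.init T v = stOf M σ0 q0 n := hrunv
    rwa [runFrom_snoc, hrunv', hTv] at hsub
  choose off hoff using hoffex
  set S := spineTree d a off with hS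
  have hstofn : ∀ n, M.follow q0 (List.ofFn fun i : Fin n => ((a i : Alpha), (d i : Bool)))
      = stOf M σ0 q0 n := by
    intro n
    have hl : (List.ofFn fun i : Fin n => ((a i : Alpha), (d i : Bool)))
        = List.ofFn fun i : Fin n => σ0 i := by
      congr 1
    exact congrArg (M.follow q0) hl
  have hspine_states : ∀ n, M.runFrom q0 S (List.ofFn fun i : Fin n => d i)
      = stOf M σ0 q0 n := by
    intro n
    rw [hS, spine_run, hstofn]
  have hsp : ParityAccept (fun n => M.rank (stOf M σ0 q0 n)) := by
    rw [parityAccept_def]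
    have hw : ∀ i, i ≤ lam0.length →
        M.rank (stOf M σ0 q0 (0 + i)) = M.rank (M.follow q0 (lam0.take i)) := by
      intro i hi
      rw [Nat.zero_add]
      rcases Nat.lt_or_ge i L0 with h | h
      · rw [hstmod i, Nat.mod_eq_of_lt h]
      · have hiL : i = L0 := by omega
        subst hiL
        rw [hstL0]
        congr 1
        rw [show lam0.take L0 = lam0 from List.take_length (l := lam0), hloop0.2]
    have hss := sSup_eq_maxRankOn M (f := fun n => M.rank (stOf M σ0 q0 n)) (n₀ := 0)
      hloop0.1 (fun n _ => congrArg M.rank (hstper n)) hw hloop0.2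
    rw [hss]
    exact heven
  have hSaccept : M.AcceptsFrom q0 S := by
    rw [hS]
    apply spine_accepts M d a off q0
    · intro kk
      rw [hstofn]
      exact hoff kk
    · have he : (fun n => M.rank (M.follow q0 (List.ofFn fun i : Fin n => ((a i : Alpha), (d i : Bool)))))
          = fun n => M.rank (stOf M σ0 q0 n) := by
        funext n
        rw [hstofn]
      rw [he]
      exact hsp
  -- a productive tree reaching q0
  have hq0prod : M.Productive q0 := by
    apply hprodQ
    exact hnotbot q0 (self_mem_statesOn M q0 lam0)
  obtain ⟨T0, hT0, v0, hv0⟩ := hq0prod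
  set tstar := graft T0 v0 S with hts
  have htstar : tstar ∈ M.Lang := by
    show M.AcceptsFrom M.init tstar
    apply graft_accepts M (hT0 : M.AcceptsFrom M.init T0)
    have hv0' : M.runFrom M.init T0 v0 = q0 := hv0
    rw [hv0']
    exact hSaccept
  -- the rejecting tail spine
  set ρ : List (Alpha × Bool) := lam0.take k ++ c ++ lam1.drop k' with hρ
  set P := ρ.length with hP
  set L1 := lam1.length with hL1def
  set σ1 : ℕ → Alpha × Bool := fun i =>
    if h : i < P then ρ[i] else lam1[(i - P) % L1]'(Nat.mod_lt _ hL1) with hσ1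
  set d1 : ℕ → Bool := fun n => (σ1 n).2 with hd1
  set a1 : ℕ → Alpha := fun n => (σ1 n).1 with ha1
  set offc : ℕ → List Bool → Alpha := fun _ _ => Classical.arbitrary Alpha with hoffc
  set Rn := spineTree d1 a1 offc with hRn
  have hfollowρ : M.follow q0 ρ = q1 := by
    rw [hρ, follow_append, follow_append, hks, hc, ← hks', ← follow_append,
      List.take_append_drop]
    exact hloop1.2
  have hofn1 : ∀ i, i ≤ L1 → (List.ofFn fun j : Fin (P + i) => σ1 j) = ρ ++ lam1.take i := by
    intro i hi
    apply List.ext_getElem (by simp [hP, hL1def]; omega)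
    intro j hj1 hj2
    rw [List.getElem_ofFn]
    simp only [hσ1]
    rcases Nat.lt_or_ge j P with h | h
    · rw [dif_pos h]
      exact (List.getElem_append_left (bs := lam1.take i) (h : j < ρ.length)).symm
    · rw [dif_neg (by omega)]
      rw [List.getElem_append_right (h : ρ.length ≤ j), List.getElem_take]
      congr 1
      exact Nat.mod_eq_of_lt (by simp at hj1; omega)
  have hst1w : ∀ i, i ≤ L1 → stOf M σ1 q0 (P + i) = M.follow q1 (lam1.take i) := by
    intro i hi
    show M.follow q0 _ = _
    rw [hofn1 i hi, follow_append, hfollowρ]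
  have hst1per : ∀ n, P ≤ n → stOf M σ1 q0 (n + L1) = stOf M σ1 q0 n := by
    apply stOf_per M
    · intro n hn
      simp only [hσ1]
      rw [dif_neg (by omega), dif_neg (by omega)]
      congr 1
      rw [show n + L1 - P = (n - P) + L1 by omega, Nat.add_mod_right]
    · rw [hst1w L1 le_rfl]
      have h0 := hst1w 0 (Nat.zero_le _)
      rw [Nat.add_zero] at h0
      rw [h0, show lam1.take L1 = lam1 from List.take_length (l := lam1), hloop1.2,
        List.take_zero, follow_nil]
  -- pivot nodes and perturbed trees
  set w0 : ℕ → List Bool := fun n => v0 ++ (List.ofFn fun i : Fin (L0 * (n+1)) => d i) with hw0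
  have hw0len : ∀ n, (w0 n).length = v0.length + L0 * (n+1) := by
    intro n
    simp [hw0]
  have hrunw0 : ∀ n, M.runFrom M.init tstar (w0 n) = q0 := by
    intro n
    rw [hw0]
    simp only
    rw [runFrom_append]
    have e1 : M.runFrom M.init tstar v0 = q0 := by
      rw [hts, runFrom_graft_eq]
      exact hv0
    have e2 : (fun u => tstar (v0 ++ u)) = S := by
      rw [hts]
      exact graft_subtree T0 v0 S
    rw [e1, e2, hspine_states]
    have hit := per_iterate (n₀ := 0) (f := stOf M σ0 q0) (fun m _ => hstper m) (n+1) 0 le_rfl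
    rw [Nat.zero_add] at hit
    rw [show L0 * (n+1) = (n+1) * L0 by ring, hit, stOf_zero]
  set tn : ℕ → (List Bool → Alpha) := fun n => graft tstar (w0 n) Rn with htn
  have hreject : ∀ n, tn n ∉ M.Lang := by
    intro n hmem
    set W := (w0 n).length with hW
    set π : ℕ → Bool := fun m => if h : m < W then (w0 n)[m] else d1 (m - W) with hπr
    have hprefW : pref π W = w0 n := by
      apply List.ext_getElem (by simp [pref_length, hW])
      intro i hi1 hi2
      rw [pref_getElem, hπr]
      simp only
      rw [dif_pos (hi2 : i < W)]
    have hshift : (fun j => π (W + j)) = d1 := by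
      funext j
      rw [hπr]
      simp only
      rw [dif_neg (by omega), Nat.add_sub_cancel_left]
    have hkey : ∀ j, M.runFrom M.init (tn n) (pref π (W + j)) = stOf M σ1 q0 j := by
      intro j
      rw [pref_append, hprefW, hshift, runFrom_append]
      have e1 : M.runFrom M.init (tn n) (w0 n) = q0 := by
        rw [htn]
        simp only
        rw [runFrom_graft_eq]
        exact hrunw0 n
      have e2 : (fun u => (tn n) (w0 n ++ u)) = Rn := by
        rw [htn]
        exact graft_subtree tstar (w0 n) Rn
      rw [e1, e2, hRn]
      have h0 : pref d1 j = List.ofFn fun i : Fin j => d1 i := rfl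
      rw [h0, spine_run]
      have hl : (List.ofFn fun i : Fin j => ((a1 i : Alpha), (d1 i : Bool)))
          = List.ofFn fun i : Fin j => σ1 i := by
        congr 1
      exact congrArg (M.follow q0) hl
    have hacc := (hmem : M.AcceptsFrom M.init (tn n)) π
    set f1 : ℕ → ℕ := fun j => M.rank (stOf M σ1 q0 j) with hf1
    have htr : ParityAccept f1 := by
      have hcg : ∀ᶠ m in atTop,
          M.rank (M.runFrom M.init (tn n) (pref π m)) = f1 (m - W) := by
        filter_upwards [eventually_ge_atTop W] with m hm
        conv_lhs => rw [show m = W + (m - W) by omega]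
        rw [hkey]
      exact (parity_sub f1 W).1 ((parity_congr hcg).1 hacc)
    have hss : sSup (freqSet f1) = M.maxRankOn q1 lam1 := by
      refine sSup_eq_maxRankOn M (n₀ := P) hloop1.1 ?_ ?_ hloop1.2
      · intro m hm
        exact congrArg M.rank (hst1per m hm)
      · intro i hi
        exact congrArg M.rank (hst1w i hi)
    rw [parityAccept_def, hss] at htr
    exact hodd htr
  -- convergence and conclusion
  intro hopen
  have htend : Tendsto tn atTop (nhds tstar) := by
    rw [tendsto_pi_nhds]
    intro v
    have hev : ∀ᶠ n in atTop, tstar v = tn n v := by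
      filter_upwards [eventually_ge_atTop (v.length + 1)] with n hn
      rw [htn]
      simp only
      rw [graft_not_prefix]
      intro hpre
      have hle := hpre.length_le
      rw [hw0len] at hle
      have hmul : n + 1 ≤ L0 * (n+1) := Nat.le_mul_of_pos_left _ hL0
      omega
    exact Tendsto.congr' hev tendsto_const_nhds
  have hevmem : ∀ᶠ n in atTop, tn n ∈ M.Lang :=
    htend.eventually (hopen.eventually_mem htstar)
  obtain ⟨n, hn⟩ := hevmem.exists
  exact hreject n hn
end DW
/-- the language of a normalized deterministic tree automaton is open
iff the automaton contains no weak `(0,1)`-flower. -/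
theorem open_iff_no_weak_01_flower {Alpha Q : Type} [Fintype Alpha] [Nonempty Alpha] [Fintype Q]
    [TopologicalSpace Alpha] [DiscreteTopology Alpha]
    (M : DPTA Alpha Q) (hM : M.Normalized) :
    IsOpen M.Lang ↔ ¬ HasWeakFlower M 0 1 := by
  constructor
  · intro hop hfl
    exact DW.flower_not_open M hM hfl hop
  · exact DW.open_of_no_flower M
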